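/- arXiv:2401.03649 — 6 statements merged into one kernel-verified Lean document; each statement's English description precedes it below -/
import Mathlib

section
/- Let θ > 0. The Fisher information of the zero-truncated Poisson family at θ equals c₁(θ)²/θ, i.e. ∑_{y=1}^{∞} (y/θ − exp(θ)/(exp(θ) − 1))² · θ^y/(y!·(exp(θ) − 1)) = (1 − (1 + θ)·exp(−θ)) / (θ·(1 − exp(−θ))²), where c₁(θ) = √(1 − (1 + θ)·exp(−θ)) / (1 − exp(−θ)). Consequently the Jeffreys prior of the zero-truncated Poisson model is c₁(θ)/√θ. -/
open Real

/-- Zero-truncated Poisson pmf with rate `θ`. -/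
noncomputable def truncPoissonPMF (θ : ℝ) (y : ℕ) : ℝ :=
  if y = 0 then 0 else θ ^ y / ((Nat.factorial y : ℝ) * (Real.exp θ - 1))

/-- `c₁(θ) = √(1 − (1 + θ)·exp(−θ)) / (1 − exp(−θ))`. -/
noncomputable def c₁ (θ : ℝ) : ℝ :=
  Real.sqrt (1 - (1 + θ) * Real.exp (-θ)) / (1 - Real.exp (-θ))

lemma sumA (θ : ℝ) : ∑' n : ℕ, θ ^ n / (Nat.factorial n : ℝ) = Real.exp θ := by
  rw [Real.exp_eq_exp_ℝ, NormedSpace.exp_eq_tsum_div]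

lemma summableA (θ : ℝ) : Summable (fun n : ℕ => θ ^ n / (Nat.factorial n : ℝ)) :=
  Real.summable_pow_div_factorial θ

lemma shiftB (θ : ℝ) (n : ℕ) :
    ((n + 1 : ℕ) : ℝ) * θ ^ (n + 1) / (Nat.factorial (n + 1) : ℝ)
      = θ * (θ ^ n / (Nat.factorial n : ℝ)) := by
  rw [Nat.factorial_succ]
  push_cast
  have h : ((Nat.factorial n : ℝ)) ≠ 0 := Nat.cast_ne_zero.mpr (Nat.factorial_ne_zero n)
  field_simp
  ring

lemma summableB (θ : ℝ) :
    Summable (fun n : ℕ => (n : ℝ) * θ ^ n / (Nat.factorial n : ℝ)) := by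
  rw [← summable_nat_add_iff 1]
  have := (summableA θ).mul_left θ
  refine this.congr fun n => ?_
  rw [← shiftB]

lemma sumB (θ : ℝ) :
    ∑' n : ℕ, (n : ℝ) * θ ^ n / (Nat.factorial n : ℝ) = θ * Real.exp θ := by
  rw [Summable.tsum_eq_zero_add (summableB θ)]
  simp only [Nat.cast_zero, zero_mul, zero_div, zero_add]
  rw [tsum_congr (shiftB θ), tsum_mul_left, sumA]

lemma shiftC (θ : ℝ) (n : ℕ) :
    ((n + 1 : ℕ) : ℝ) ^ 2 * θ ^ (n + 1) / (Nat.factorial (n + 1) : ℝ)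
      = θ * ((n : ℝ) * θ ^ n / (Nat.factorial n : ℝ)) + θ * (θ ^ n / (Nat.factorial n : ℝ)) := by
  rw [Nat.factorial_succ]
  push_cast
  have h : ((Nat.factorial n : ℝ)) ≠ 0 := Nat.cast_ne_zero.mpr (Nat.factorial_ne_zero n)
  field_simp
  ring

lemma summableC (θ : ℝ) :
    Summable (fun n : ℕ => (n : ℝ) ^ 2 * θ ^ n / (Nat.factorial n : ℝ)) := by
  rw [← summable_nat_add_iff 1]
  have := ((summableB θ).mul_left θ).add ((summableA θ).mul_left θ)
  refine this.congr fun n => ?_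
  rw [← shiftC]

lemma sumC (θ : ℝ) :
    ∑' n : ℕ, (n : ℝ) ^ 2 * θ ^ n / (Nat.factorial n : ℝ) = θ * (θ + 1) * Real.exp θ := by
  rw [Summable.tsum_eq_zero_add (summableC θ)]
  rw [tsum_congr (shiftC θ),
    Summable.tsum_add (((summableB θ).mul_left θ)) (((summableA θ).mul_left θ)),
    tsum_mul_left, tsum_mul_left, sumB, sumA]
  norm_num
  ring

/-- The Fisher information of the zero-truncated Poisson family at `θ` equals
`c₁(θ)²/θ`, i.e. the expectation of the squared score is
`(1 − (1 + θ)·exp(−θ)) / (θ·(1 − exp(−θ))²)`; consequently, the Jeffreys prior of the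
zero-truncated Poisson model is `c₁(θ)/√θ`. -/
theorem truncated_poisson_fisher_information (θ : ℝ) (hθ : 0 < θ) :
    (∑' y : ℕ,
        ((y : ℝ) / θ - Real.exp θ / (Real.exp θ - 1)) ^ 2 * truncPoissonPMF θ y) =
      (1 - (1 + θ) * Real.exp (-θ)) / (θ * (1 - Real.exp (-θ)) ^ 2) ∧
    Real.sqrt ((1 - (1 + θ) * Real.exp (-θ)) / (θ * (1 - Real.exp (-θ)) ^ 2)) =
      c₁ θ / Real.sqrt θ := by
  have hθ0 : θ ≠ 0 := ne_of_gt hθ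
  have hE1 : (1 : ℝ) < Real.exp θ := by
    have := Real.add_one_lt_exp hθ0
    linarith
  have hE : Real.exp θ - 1 ≠ 0 := by linarith
  have hEpos : (0 : ℝ) < Real.exp θ := Real.exp_pos θ
  set μ : ℝ := Real.exp θ / (Real.exp θ - 1) with hμ
  -- untruncated term
  set g : ℕ → ℝ := fun y =>
    ((y : ℝ) / θ - μ) ^ 2 * (θ ^ y / ((Nat.factorial y : ℝ) * (Real.exp θ - 1))) with hg
  have hgform : ∀ y : ℕ, g y =
      (1 / (θ ^ 2 * (Real.exp θ - 1))) * ((y : ℝ) ^ 2 * θ ^ y / (Nat.factorial y : ℝ))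
      + (-(2 * μ) / (θ * (Real.exp θ - 1))) * ((y : ℝ) * θ ^ y / (Nat.factorial y : ℝ))
      + (μ ^ 2 / (Real.exp θ - 1)) * (θ ^ y / (Nat.factorial y : ℝ)) := by
    intro y
    have h : ((Nat.factorial y : ℝ)) ≠ 0 := Nat.cast_ne_zero.mpr (Nat.factorial_ne_zero y)
    simp only [hg]
    field_simp
    ring
  have hsg : Summable g := by
    refine Summable.congr ?_ (fun y => (hgform y).symm)
    exact (((summableC θ).mul_left _).add ((summableB θ).mul_left _)).add
      ((summableA θ).mul_left _)
  have htsg : ∑' y, g y =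
      (1 / (θ ^ 2 * (Real.exp θ - 1))) * (θ * (θ + 1) * Real.exp θ)
      + (-(2 * μ) / (θ * (Real.exp θ - 1))) * (θ * Real.exp θ)
      + (μ ^ 2 / (Real.exp θ - 1)) * Real.exp θ := by
    rw [tsum_congr hgform,
      Summable.tsum_add ((((summableC θ).mul_left _).add ((summableB θ).mul_left _)))
        ((summableA θ).mul_left _),
      Summable.tsum_add ((summableC θ).mul_left _) ((summableB θ).mul_left _),
      tsum_mul_left, tsum_mul_left, tsum_mul_left, sumA, sumB, sumC]
  -- relate truncated sum to g
  have hf : ∀ y : ℕ,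
      ((y : ℝ) / θ - Real.exp θ / (Real.exp θ - 1)) ^ 2 * truncPoissonPMF θ y
        = g y - (if y = 0 then μ ^ 2 / (Real.exp θ - 1) else 0) := by
    intro y
    cases y with
    | zero => simp [truncPoissonPMF, hg, hμ, div_eq_mul_inv]
    | succ n => simp [truncPoissonPMF, hg, hμ]
  have hsum : (∑' y : ℕ,
      ((y : ℝ) / θ - Real.exp θ / (Real.exp θ - 1)) ^ 2 * truncPoissonPMF θ y)
      = (∑' y, g y) - μ ^ 2 / (Real.exp θ - 1) := by
    rw [tsum_congr hf, Summable.tsum_sub hsg]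
    · congr 1
      exact tsum_eq_single 0 (by intro b hb; simp [hb])
    · refine summable_of_finite_support ((Set.finite_singleton 0).subset fun x hx => ?_)
      by_cases h : x = 0
      · simp [h]
      · simp [Function.mem_support, h] at hx
  constructor
  · rw [hsum, htsg, hμ]
    have hexpneg : Real.exp (-θ) = (Real.exp θ)⁻¹ := Real.exp_neg θ
    rw [hexpneg]
    have h1 : (1 : ℝ) - (Real.exp θ)⁻¹ = (Real.exp θ - 1) / Real.exp θ := by
      field_simp
    field_simp
    ring
  · -- sqrt identity
    have hNnonneg : (0 : ℝ) ≤ 1 - (1 + θ) * Real.exp (-θ) := by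
      have h := Real.add_one_le_exp θ
      have hne : Real.exp (-θ) > 0 := Real.exp_pos _
      have : (1 + θ) * Real.exp (-θ) ≤ Real.exp θ * Real.exp (-θ) := by
        apply mul_le_mul_of_nonneg_right _ (le_of_lt hne)
        linarith
      rw [← Real.exp_add] at this
      simp at this
      linarith
    have hD : (0 : ℝ) < 1 - Real.exp (-θ) := by
      have : Real.exp (-θ) < 1 := by
        rw [Real.exp_lt_one_iff]; linarith
      linarith
    rw [Real.sqrt_div hNnonneg, Real.sqrt_mul hθ.le, Real.sqrt_sq hD.le, c₁,
      div_div]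
    ring_nf
end

section
/- Let n ≥ 1 and let ϖ, φ be natural numbers with 0 ≤ ϖ < n and φ ≥ 1. Then the marginal likelihood integral of the zero-inflated Poisson model under the prior θ^{−1/2}·𝟙(0 < α < 1) satisfies ∫₀^{1} ∫₀^{∞} (α + (1 − α)·exp(−θ))^{ϖ} · (1 − α)^{n−ϖ} · exp(−(n − ϖ)·θ) · θ^{φ} · θ^{−1/2} dθ dα = (ϖ!/(n+1)!) · ∑_{j=0}^{ϖ} ((n−j)!/(ϖ−j)!) · Γ(φ + 1/2) · (n − j)^{−(φ + 1/2)}. -/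
open Real Finset MeasureTheory

lemma zip_aux_integrable {s r : ℝ} (hs : 0 < s) (hr : 0 < r) :
    MeasureTheory.IntegrableOn (fun θ : ℝ => θ ^ (s - 1) * Real.exp (-(r * θ)))
      (Set.Ioi 0) := by
  have h0 := Real.GammaIntegral_convergent hs
  rw [← mul_zero r, ← MeasureTheory.integrableOn_Ioi_comp_mul_left_iff _ _ hr] at h0
  have h1 : MeasureTheory.IntegrableOn
      (fun x : ℝ => ((r : ℝ) ^ (s - 1))⁻¹ * (Real.exp (-(r * x)) * (r * x) ^ (s - 1)))
      (Set.Ioi 0) := h0.const_mul _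
  refine h1.congr_fun (fun θ hθ => ?_) measurableSet_Ioi
  have hθ0 : (0:ℝ) < θ := hθ
  beta_reduce
  rw [Real.mul_rpow hr.le hθ0.le]
  have hne : (r : ℝ) ^ (s-1) ≠ 0 := (Real.rpow_pos_of_pos hr _).ne'
  field_simp

lemma zip_beta_nat (k m : ℕ) :
    ∫ x in (0:ℝ)..1, x ^ k * (1 - x) ^ m =
      (k.factorial * m.factorial : ℝ) / ((k + m + 1).factorial : ℝ) := by
  have hu : 0 < ((k : ℂ) + 1).re := by simp; positivity
  have hv : 0 < ((m : ℂ) + 1).re := by simp; positivity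
  have hB := Complex.Gamma_mul_Gamma_eq_betaIntegral hu hv
  rw [show ((k:ℂ)+1) + ((m:ℂ)+1) = ((k+m+1:ℕ):ℂ)+1 by push_cast; ring] at hB
  rw [Complex.Gamma_nat_eq_factorial, Complex.Gamma_nat_eq_factorial,
      Complex.Gamma_nat_eq_factorial] at hB
  have hfac : (((k+m+1).factorial : ℂ)) ≠ 0 :=
    Nat.cast_ne_zero.mpr (Nat.factorial_ne_zero _)
  have hBval : Complex.betaIntegral ((k:ℂ)+1) ((m:ℂ)+1)
      = ((k.factorial : ℂ) * (m.factorial : ℂ)) / (((k+m+1).factorial : ℂ)) := by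
    rw [eq_div_iff hfac]; linear_combination -hB
  have h2 : ((∫ x in (0:ℝ)..1, x ^ k * (1 - x) ^ m : ℝ) : ℂ)
      = Complex.betaIntegral ((k:ℂ)+1) ((m:ℂ)+1) := by
    rw [Complex.betaIntegral, ← intervalIntegral.integral_ofReal]
    refine intervalIntegral.integral_congr fun x hx => ?_
    rw [show ((k:ℂ)+1) - 1 = ((k:ℕ):ℂ) by ring,
        show ((m:ℂ)+1) - 1 = ((m:ℕ):ℂ) by ring,
        Complex.cpow_natCast, Complex.cpow_natCast]
    push_cast
    ring
  rw [← Complex.ofReal_inj, h2, hBval]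
  push_cast
  ring

lemma zip_inner (n ϖ φ : ℕ) (hϖ : ϖ < n) (α : ℝ) :
    (∫ θ in Set.Ioi (0:ℝ), (α + (1 - α) * Real.exp (-θ)) ^ ϖ * (1 - α) ^ (n - ϖ) *
        Real.exp (-((n - ϖ : ℕ) : ℝ) * θ) * θ ^ φ * θ ^ (-(1 / 2 : ℝ)))
      = ∑ k ∈ Finset.range (ϖ + 1),
          (ϖ.choose k : ℝ) * α ^ k * (1 - α) ^ (n - k) *
            (Real.Gamma ((φ:ℝ) + 1/2) * ((n - k : ℕ) : ℝ) ^ (-((φ:ℝ) + 1/2))) := by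
  set s : ℝ := (φ:ℝ) + 1/2 with hs_def
  have hs : 0 < s := by positivity
  have step1 : (∫ θ in Set.Ioi (0:ℝ), (α + (1 - α) * Real.exp (-θ)) ^ ϖ * (1 - α) ^ (n - ϖ) *
        Real.exp (-((n - ϖ : ℕ) : ℝ) * θ) * θ ^ φ * θ ^ (-(1 / 2 : ℝ)))
      = ∫ θ in Set.Ioi (0:ℝ), ∑ k ∈ Finset.range (ϖ + 1),
          (ϖ.choose k : ℝ) * α ^ k * (1 - α) ^ (n - k) *
            (θ ^ (s - 1) * Real.exp (-(((n - k : ℕ) : ℝ) * θ))) := by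
    refine setIntegral_congr_fun measurableSet_Ioi (fun θ hθ => ?_)
    have hθ0 : (0:ℝ) < θ := hθ
    rw [add_pow]
    rw [Finset.sum_mul, Finset.sum_mul, Finset.sum_mul, Finset.sum_mul]
    refine Finset.sum_congr rfl (fun k hk => ?_)
    have hk1 : k ≤ ϖ := Nat.lt_succ_iff.mp (Finset.mem_range.mp hk)
    have hkn : k ≤ n := hk1.trans hϖ.le
    have e1 : (Real.exp (-θ)) ^ (ϖ - k) = Real.exp (-(((ϖ - k : ℕ) : ℝ) * θ)) := by
      rw [← Real.exp_nat_mul]; ring_nf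
    have e2 : Real.exp (-(((ϖ - k : ℕ) : ℝ) * θ)) * Real.exp (-((n - ϖ : ℕ) : ℝ) * θ)
        = Real.exp (-(((n - k : ℕ) : ℝ) * θ)) := by
      rw [← Real.exp_add]
      congr 1
      rw [Nat.cast_sub hk1, Nat.cast_sub hϖ.le, Nat.cast_sub hkn]
      ring
    have e4 : (ϖ - k) + (n - ϖ) = n - k := by omega
    calc α ^ k * ((1 - α) * Real.exp (-θ)) ^ (ϖ - k) * (ϖ.choose k : ℝ) * (1 - α) ^ (n - ϖ) *
          Real.exp (-((n - ϖ : ℕ) : ℝ) * θ) * θ ^ φ * θ ^ (-(1 / 2 : ℝ))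
        = (ϖ.choose k : ℝ) * α ^ k * ((1 - α) ^ (ϖ - k) * (1 - α) ^ (n - ϖ)) *
            ((Real.exp (-(((ϖ - k : ℕ) : ℝ) * θ)) * Real.exp (-((n - ϖ : ℕ) : ℝ) * θ)) *
              (θ ^ ((φ:ℝ)) * θ ^ (-(1 / 2 : ℝ)))) := by
          rw [mul_pow, e1, Real.rpow_natCast]; ring
      _ = (ϖ.choose k : ℝ) * α ^ k * (1 - α) ^ (n - k) *
            (θ ^ (s - 1) * Real.exp (-(((n - k : ℕ) : ℝ) * θ))) := by
          rw [← pow_add, e4, e2, ← Real.rpow_add hθ0]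
          rw [show (φ:ℝ) + -(1/2) = s - 1 by rw [hs_def]; ring]
          ring
  rw [step1]
  rw [MeasureTheory.integral_finset_sum]
  · refine Finset.sum_congr rfl (fun k hk => ?_)
    have hk1 : k ≤ ϖ := Nat.lt_succ_iff.mp (Finset.mem_range.mp hk)
    have hr : (0:ℝ) < ((n - k : ℕ) : ℝ) := by
      have : 0 < n - k := by omega
      exact_mod_cast this
    rw [MeasureTheory.integral_const_mul, integral_rpow_mul_exp_neg_mul_Ioi hs hr]
    rw [one_div, Real.inv_rpow hr.le, ← Real.rpow_neg hr.le]
    ring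
  · intro k hk
    have hk1 : k ≤ ϖ := Nat.lt_succ_iff.mp (Finset.mem_range.mp hk)
    have hr : (0:ℝ) < ((n - k : ℕ) : ℝ) := by
      have : 0 < n - k := by omega
      exact_mod_cast this
    exact (zip_aux_integrable hs hr).const_mul _

/-- The marginal likelihood integral of the zero-inflated Poisson model under the prior
`θ^{−1/2}·𝟙(0 < α < 1)` equals
`(ϖ!/(n+1)!) · ∑_{j=0}^{ϖ} ((n−j)!/(ϖ−j)!) · Γ(φ + 1/2) · (n − j)^{−(φ + 1/2)}`. -/
theorem zip_marginal_likelihood (n ϖ φ : ℕ) (hn : 1 ≤ n) (hϖ : ϖ < n) (hφ : 1 ≤ φ) :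
    ∫ α in Set.Ioo (0 : ℝ) 1, ∫ θ in Set.Ioi (0 : ℝ),
        (α + (1 - α) * Real.exp (-θ)) ^ ϖ * (1 - α) ^ (n - ϖ) *
          Real.exp (-((n - ϖ : ℕ) : ℝ) * θ) * θ ^ φ * θ ^ (-(1 / 2 : ℝ)) =
      ((Nat.factorial ϖ : ℝ) / (Nat.factorial (n + 1) : ℝ)) *
        ∑ j ∈ Finset.range (ϖ + 1),
          ((Nat.factorial (n - j) : ℝ) / (Nat.factorial (ϖ - j) : ℝ)) *
            Real.Gamma ((φ : ℝ) + 1 / 2) *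
            ((n - j : ℕ) : ℝ) ^ (-((φ : ℝ) + 1 / 2)) := by
  have step1 : ∫ α in Set.Ioo (0 : ℝ) 1, ∫ θ in Set.Ioi (0 : ℝ),
        (α + (1 - α) * Real.exp (-θ)) ^ ϖ * (1 - α) ^ (n - ϖ) *
          Real.exp (-((n - ϖ : ℕ) : ℝ) * θ) * θ ^ φ * θ ^ (-(1 / 2 : ℝ))
      = ∫ α in Set.Ioo (0 : ℝ) 1, ∑ k ∈ Finset.range (ϖ + 1),
          (ϖ.choose k : ℝ) * α ^ k * (1 - α) ^ (n - k) *
            (Real.Gamma ((φ:ℝ) + 1/2) * ((n - k : ℕ) : ℝ) ^ (-((φ:ℝ) + 1/2))) :=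
    setIntegral_congr_fun measurableSet_Ioo (fun α _ => zip_inner n ϖ φ hϖ α)
  rw [step1]
  rw [MeasureTheory.integral_finset_sum _ (fun k hk => by
    have hc : Continuous (fun α : ℝ => (ϖ.choose k : ℝ) * α ^ k * (1 - α) ^ (n - k) *
        (Real.Gamma ((φ:ℝ) + 1/2) * ((n - k : ℕ) : ℝ) ^ (-((φ:ℝ) + 1/2)))) := by
      continuity
    exact (hc.integrableOn_Icc (a := 0) (b := 1)).mono_set Set.Ioo_subset_Icc_self)]
  rw [Finset.mul_sum]
  refine Finset.sum_congr rfl (fun k hk => ?_)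
  have hk1 : k ≤ ϖ := Nat.lt_succ_iff.mp (Finset.mem_range.mp hk)
  have hkn : k ≤ n := hk1.trans hϖ.le
  set K : ℝ := Real.Gamma ((φ:ℝ) + 1/2) * ((n - k : ℕ) : ℝ) ^ (-((φ:ℝ) + 1/2)) with hK
  have hfun : ∀ α : ℝ, (ϖ.choose k : ℝ) * α ^ k * (1 - α) ^ (n - k) * K
      = ((ϖ.choose k : ℝ) * K) * (α ^ k * (1 - α) ^ (n - k)) := fun α => by ring
  simp only [hfun]
  rw [MeasureTheory.integral_const_mul]
  have hIoo : ∫ α in Set.Ioo (0:ℝ) 1, α ^ k * (1 - α) ^ (n - k)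
      = ∫ α in (0:ℝ)..1, α ^ k * (1 - α) ^ (n - k) := by
    rw [intervalIntegral.integral_of_le zero_le_one, MeasureTheory.integral_Ioc_eq_integral_Ioo]
  rw [hIoo, zip_beta_nat]
  rw [show k + (n - k) + 1 = n + 1 by omega]
  have hchoose : (ϖ.choose k : ℝ) * (k.factorial : ℝ) * ((ϖ - k).factorial : ℝ)
      = (ϖ.factorial : ℝ) := by
    exact_mod_cast congrArg (Nat.cast : ℕ → ℝ) (Nat.choose_mul_factorial_mul_factorial hk1)
  have hne1 : ((n+1).factorial : ℝ) ≠ 0 := Nat.cast_ne_zero.mpr (Nat.factorial_ne_zero _)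
  have hne2 : (((ϖ - k)).factorial : ℝ) ≠ 0 := Nat.cast_ne_zero.mpr (Nat.factorial_ne_zero _)
  rw [← hchoose]
  set R : ℝ := ((n - k : ℕ) : ℝ) ^ (-((φ:ℝ) + 1/2)) with hR
  set G : ℝ := Real.Gamma ((φ:ℝ) + 1/2) with hG
  field_simp
  ring
end

section
/- Let γ > 0, let a > 0 be a real number, and let φ ≥ 0 be a real number. Then ∫₀^{∞} (γ/(γ+κ))^{aγ} · (κ/(γ+κ))^{φ} · √(γ/(κ·(γ+κ))) dκ = √γ · B(φ + 1/2, aγ), where B(x, y) = Γ(x)Γ(y)/Γ(x + y) is the Beta function. In particular, with a = n and φ = ∑ᵢ yᵢ this computes the marginal likelihood integral of the negative binomial model under the Jeffreys prior π_J^{NB}(κ) = √(γ/(κ(γ+κ))). -/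
open Real MeasureTheory

lemma real_beta (p q : ℝ) (hp : 0 < p) (hq : 0 < q) :
    ∫ x in Set.Ioo (0:ℝ) 1, x ^ (p-1) * (1-x) ^ (q-1) =
      Real.Gamma p * Real.Gamma q / Real.Gamma (p+q) := by
  have key : Complex.betaIntegral p q
      = ((∫ x in (0:ℝ)..1, x ^ (p-1) * (1-x) ^ (q-1) : ℝ) : ℂ) := by
    rw [Complex.betaIntegral, ← intervalIntegral.integral_ofReal]
    apply intervalIntegral.integral_congr
    intro x hx
    rw [Set.uIcc_of_le zero_le_one] at hx
    push_cast
    rw [Complex.ofReal_cpow hx.1, Complex.ofReal_cpow (by linarith [hx.2])]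
    push_cast
    ring
  have h := Complex.Gamma_mul_Gamma_eq_betaIntegral
    (s := p) (t := q) (by simpa using hp) (by simpa using hq)
  rw [key, Complex.Gamma_ofReal, Complex.Gamma_ofReal, ← Complex.ofReal_mul,
    show (p:ℂ) + q = ((p+q:ℝ):ℂ) by push_cast; ring, Complex.Gamma_ofReal,
    ← Complex.ofReal_mul] at h
  have h' : Real.Gamma p * Real.Gamma q
      = Real.Gamma (p+q) * ∫ x in (0:ℝ)..1, x ^ (p-1) * (1-x) ^ (q-1) := by
    exact_mod_cast h
  have hne : Real.Gamma (p+q) ≠ 0 := (Real.Gamma_pos_of_pos (by linarith)).ne'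
  rw [intervalIntegral.integral_of_le zero_le_one, MeasureTheory.integral_Ioc_eq_integral_Ioo] at h'
  field_simp [h']
  rw [h']; ring

/-- The marginal likelihood integral of the negative binomial model under the Jeffreys
prior `√(γ/(κ(γ+κ)))` equals `√γ · B(φ + 1/2, aγ)`, where
`B(x, y) = Γ(x)Γ(y)/Γ(x + y)` is the Beta function. -/
theorem nb_marginal_likelihood (γ a φ : ℝ) (hγ : 0 < γ) (ha : 0 < a) (hφ : 0 ≤ φ) :
    ∫ κ in Set.Ioi (0 : ℝ),
        (γ / (γ + κ)) ^ (a * γ) * (κ / (γ + κ)) ^ φ *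
          Real.sqrt (γ / (κ * (γ + κ))) =
      Real.sqrt γ *
        (Real.Gamma (φ + 1 / 2) * Real.Gamma (a * γ) /
          Real.Gamma (φ + 1 / 2 + a * γ)) := by
  set g : ℝ → ℝ := fun κ =>
    (γ / (γ + κ)) ^ (a * γ) * (κ / (γ + κ)) ^ φ * Real.sqrt (γ / (κ * (γ + κ))) with hg
  set f : ℝ → ℝ := fun u => γ * u / (1 - u) with hf
  have himg : f '' Set.Ioo (0:ℝ) 1 = Set.Ioi (0:ℝ) := by
    ext κ
    constructor
    · rintro ⟨u, ⟨hu0, hu1⟩, rfl⟩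
      exact div_pos (mul_pos hγ hu0) (by linarith)
    · intro hκ
      simp only [Set.mem_Ioi] at hκ
      refine ⟨κ / (γ + κ), ⟨div_pos hκ (by linarith), ?_⟩, ?_⟩
      · rw [div_lt_one (by linarith)]; linarith
      · simp only [hf]
        rw [div_eq_iff]
        · field_simp
          ring
        · intro h
          rw [sub_eq_zero] at h
          have : γ + κ = κ := by
            field_simp at h
            linarith [h]
          linarith
  have hinj : Set.InjOn f (Set.Ioo 0 1) := by
    rintro u ⟨hu0, hu1⟩ v ⟨hv0, hv1⟩ huv
    simp only [hf] at huv
    rw [div_eq_div_iff (by linarith) (by linarith)] at huv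
    nlinarith
  have hderiv : ∀ u ∈ Set.Ioo (0:ℝ) 1, HasDerivWithinAt f (γ / (1-u)^2) (Set.Ioo 0 1) u := by
    rintro u ⟨hu0, hu1⟩
    have h1 : (1:ℝ) - u ≠ 0 := by linarith
    have := (((hasDerivAt_id u).const_mul γ).div ((hasDerivAt_id u).const_sub 1) h1)
    convert this.hasDerivWithinAt using 1
    · rfl
    · rfl
    · rfl
    · simp only [id]; ring
  rw [← himg, MeasureTheory.integral_image_eq_integral_abs_deriv_smul measurableSet_Ioo hderiv hinj g]
  have hptwise : ∀ u ∈ Set.Ioo (0:ℝ) 1,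
      |γ / (1-u)^2| • g (f u)
        = Real.sqrt γ * (u ^ (φ + 1/2 - 1) * (1-u) ^ (a*γ - 1)) := by
    rintro u ⟨hu0, hu1⟩
    have h1u : (0:ℝ) < 1 - u := by linarith
    have hfu : γ + f u = γ / (1 - u) := by
      simp only [hf]; field_simp; ring
    have e1 : γ / (γ + f u) = 1 - u := by
      rw [hfu]; field_simp
    have e2 : f u / (γ + f u) = u := by
      rw [hfu]; simp only [hf]; field_simp
    have e3 : γ / (f u * (γ + f u)) = (1-u)^2 / (γ * u) := by
      rw [hfu]; simp only [hf]
      rw [div_eq_div_iff (by positivity) (by positivity)]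
      field_simp
    simp only [hg, e1, e2, e3, smul_eq_mul]
    rw [abs_of_pos (by positivity),
      Real.sqrt_div (by positivity), Real.sqrt_sq h1u.le, Real.sqrt_mul hγ.le,
      show φ + 1/2 - 1 = φ - 1/2 by ring,
      Real.rpow_sub hu0, Real.rpow_sub h1u, Real.rpow_one, Real.sqrt_eq_rpow γ, Real.sqrt_eq_rpow u]
    have hsg : Real.sqrt γ * Real.sqrt γ = γ := Real.mul_self_sqrt hγ.le
    have hsγ : (0:ℝ) < Real.sqrt γ := Real.sqrt_pos.mpr hγ
    have hup : (0:ℝ) < u ^ (1/2:ℝ) := Real.rpow_pos_of_pos hu0 _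
    have h1 : γ^(1/2:ℝ)*γ^(1/2:ℝ) = γ := by
      rw [← Real.rpow_add hγ]; norm_num
    field_simp
    linear_combination (-1 : ℝ) * h1
  rw [MeasureTheory.setIntegral_congr_fun measurableSet_Ioo hptwise,
    MeasureTheory.integral_const_mul,
    real_beta (φ + 1/2) (a*γ) (by linarith) (by positivity)]
end

section
/- Let γ > 0, let n ≥ 1, and let ϖ, φ be natural numbers with 0 ≤ ϖ < n and φ ≥ 1. Then the marginal likelihood integral of the zero-inflated negative binomial model under the prior √(γ/(κ(γ+κ)))·𝟙(0 < α < 1) satisfies ∫₀^{1} ∫₀^{∞} (α + (1 − α)·(1 + κ/γ)^{−γ})^{ϖ} · (1 − α)^{n−ϖ} · (γ/(γ+κ))^{(n−ϖ)γ} · (κ/(γ+κ))^{φ} · √(γ/(κ·(γ+κ))) dκ dα = (ϖ!·√γ/(n+1)!) · ∑_{j=0}^{ϖ} ((n−j)!/(ϖ−j)!) · B(φ + 1/2, (n − j)·γ), where B(x, y) = Γ(x)Γ(y)/Γ(x + y) is the Beta function. -/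
open Real Finset MeasureTheory

lemma norm_beta_integrand {a b t : ℝ} (ht : t ∈ Set.Ioo (0:ℝ) 1) :
    ‖(t:ℂ) ^ ((a:ℂ)-1) * ((1:ℂ)-t) ^ ((b:ℂ)-1)‖ = t ^ (a-1) * (1-t) ^ (b-1) := by
  obtain ⟨ht0, ht1⟩ := ht
  have h1 : (0:ℝ) < 1 - t := by linarith
  rw [norm_mul]
  have e1 : ((1:ℂ) - (t:ℂ)) = ((1 - t : ℝ) : ℂ) := by push_cast; ring
  rw [e1]
  rw [Complex.norm_cpow_eq_rpow_re_of_pos ht0, Complex.norm_cpow_eq_rpow_re_of_pos h1]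
  norm_num

lemma beta_integrableOn {a b : ℝ} (ha : 0 < a) (hb : 0 < b) :
    IntegrableOn (fun t : ℝ => t ^ (a-1) * (1-t) ^ (b-1)) (Set.Ioo 0 1) := by
  have hC : IntervalIntegrable (fun t : ℝ => (t:ℂ) ^ ((a:ℂ)-1) * ((1:ℂ)-t) ^ ((b:ℂ)-1))
      volume 0 1 := Complex.betaIntegral_convergent (by simpa using ha) (by simpa using hb)
  have h2 : IntegrableOn (fun t : ℝ => (t:ℂ) ^ ((a:ℂ)-1) * ((1:ℂ)-t) ^ ((b:ℂ)-1))
      (Set.Ioo 0 1) :=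
    ((intervalIntegrable_iff_integrableOn_Ioc_of_le (by norm_num)).mp hC).mono_set
      Set.Ioo_subset_Ioc_self
  have h3 := h2.norm
  exact IntegrableOn.congr_fun h3 (fun t ht => (norm_beta_integrand ht)) measurableSet_Ioo

lemma beta_integral_eq {a b : ℝ} (ha : 0 < a) (hb : 0 < b) :
    ∫ t in Set.Ioo (0:ℝ) 1, t ^ (a-1) * (1-t) ^ (b-1)
      = Real.Gamma a * Real.Gamma b / Real.Gamma (a+b) := by
  have key := Complex.Gamma_mul_Gamma_eq_betaIntegral
    (s := (a:ℂ)) (t := (b:ℂ)) (by simpa using ha) (by simpa using hb)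
  have hbeta : Complex.betaIntegral a b
      = ((∫ t in Set.Ioo (0:ℝ) 1, t ^ (a-1) * (1-t) ^ (b-1) : ℝ) : ℂ) := by
    rw [Complex.betaIntegral, intervalIntegral.integral_of_le (by norm_num : (0:ℝ) ≤ 1),
      integral_Ioc_eq_integral_Ioo]
    have step : ∫ t in Set.Ioo (0:ℝ) 1, (t:ℂ) ^ ((a:ℂ)-1) * ((1:ℂ)-t) ^ ((b:ℂ)-1)
        = ∫ t in Set.Ioo (0:ℝ) 1, ((t ^ (a-1) * (1-t) ^ (b-1) : ℝ) : ℂ) := by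
      refine setIntegral_congr_fun measurableSet_Ioo (fun t ht => ?_)
      obtain ⟨ht0, ht1⟩ := ht
      have h1 : (0:ℝ) < 1 - t := by linarith
      have e1 : ((1:ℂ) - (t:ℂ)) = ((1 - t : ℝ) : ℂ) := by push_cast; ring
      have e2 : ((a:ℂ) - 1) = ((a-1:ℝ):ℂ) := by push_cast; ring
      have e3 : ((b:ℂ) - 1) = ((b-1:ℝ):ℂ) := by push_cast; ring
      rw [e1, e2, e3, ← Complex.ofReal_cpow ht0.le, ← Complex.ofReal_cpow h1.le,
        ← Complex.ofReal_mul]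
    rw [step]
    exact integral_ofReal
  rw [hbeta, Complex.Gamma_ofReal, Complex.Gamma_ofReal, ← Complex.ofReal_add,
    Complex.Gamma_ofReal, ← Complex.ofReal_mul, ← Complex.ofReal_mul] at key
  have := Complex.ofReal_injective key
  have hG : Real.Gamma (a+b) ≠ 0 := Real.Gamma_ne_zero (by intro m; nlinarith [Nat.cast_nonneg (α := ℝ) m])
  field_simp
  linarith [this]

lemma alpha_integral (a b : ℕ) :
    ∫ α in Set.Ioo (0:ℝ) 1, α ^ a * (1-α) ^ b
      = (Nat.factorial a : ℝ) * (Nat.factorial b) / (Nat.factorial (a+b+1)) := by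
  have e : Set.EqOn (fun α : ℝ => α ^ (((a:ℝ)+1)-1) * (1-α) ^ (((b:ℝ)+1)-1))
      (fun α : ℝ => α ^ a * (1-α) ^ b) (Set.Ioo 0 1) := by
    intro t ht
    obtain ⟨ht0, ht1⟩ := ht
    have h1 : (0:ℝ) < 1 - t := by linarith
    simp only [add_sub_cancel_right]
    rw [Real.rpow_natCast, Real.rpow_natCast]
  rw [← setIntegral_congr_fun measurableSet_Ioo e,
    beta_integral_eq (by positivity) (by positivity)]
  have g1 : Real.Gamma ((a:ℝ)+1) = Nat.factorial a := by
    exact_mod_cast Real.Gamma_nat_eq_factorial a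
  have g2 : Real.Gamma ((b:ℝ)+1) = Nat.factorial b := by
    exact_mod_cast Real.Gamma_nat_eq_factorial b
  have g3 : Real.Gamma (((a:ℝ)+1) + ((b:ℝ)+1)) = Nat.factorial (a+b+1) := by
    have : ((a:ℝ)+1) + ((b:ℝ)+1) = ((a+b+1 : ℕ):ℝ) + 1 := by push_cast; ring
    rw [this]
    exact_mod_cast Real.Gamma_nat_eq_factorial (a+b+1)
  rw [g1, g2, g3]

lemma kappa_integral {γ : ℝ} (hγ : 0 < γ) {s : ℝ} (hs : 0 < s) (φ : ℕ) :
    IntegrableOn (fun κ => (γ/(γ+κ))^s * (κ/(γ+κ))^φ * Real.sqrt (γ/(κ*(γ+κ)))) (Set.Ioi 0) ∧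
    ∫ κ in Set.Ioi (0:ℝ), (γ/(γ+κ))^s * (κ/(γ+κ))^φ * Real.sqrt (γ/(κ*(γ+κ)))
      = Real.sqrt γ * (Real.Gamma ((φ:ℝ)+1/2) * Real.Gamma s / Real.Gamma ((φ:ℝ)+1/2+s)) := by
  set g : ℝ → ℝ := fun κ => (γ/(γ+κ))^s * (κ/(γ+κ))^φ * Real.sqrt (γ/(κ*(γ+κ))) with hg
  set f : ℝ → ℝ := fun t => γ * t / (1 - t) with hf
  have himg : f '' Set.Ioo 0 1 = Set.Ioi 0 := by
    ext y
    constructor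
    · rintro ⟨t, ⟨ht0, ht1⟩, rfl⟩
      exact div_pos (mul_pos hγ ht0) (by linarith)
    · intro hy
      rw [Set.mem_Ioi] at hy
      have hgy : (0:ℝ) < γ + y := by linarith
      refine ⟨y/(γ+y), ⟨by positivity, by rw [div_lt_one hgy]; linarith⟩, ?_⟩
      show γ * (y/(γ+y)) / (1 - y/(γ+y)) = y
      rw [one_sub_div hgy.ne']
      field_simp
      rw [add_sub_cancel_right, div_self hγ.ne']
  have hderiv : ∀ t ∈ Set.Ioo (0:ℝ) 1,
      HasDerivWithinAt f (γ/(1-t)^2) (Set.Ioo 0 1) t := by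
    intro t ht
    obtain ⟨ht0, ht1⟩ := ht
    have h1 : (0:ℝ) < 1 - t := by linarith
    have hd : HasDerivAt f ((γ * 1 * (1 - t) - γ * t * (0 - 1)) / (1 - t) ^ 2) t :=
      ((hasDerivAt_id t).const_mul γ).div ((hasDerivAt_const t 1).sub (hasDerivAt_id t)) h1.ne'
    have : (γ * 1 * (1 - t) - γ * t * (0 - 1)) / (1 - t) ^ 2 = γ / (1-t)^2 := by
      rw [div_eq_div_iff (by positivity) (by positivity)]
      ring
    rw [this] at hd
    exact hd.hasDerivWithinAt
  have hinj : Set.InjOn f (Set.Ioo 0 1) := by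
    intro a ⟨ha0, ha1⟩ b ⟨hb0, hb1⟩ h
    have h1a : (0:ℝ) < 1 - a := by linarith
    have h1b : (0:ℝ) < 1 - b := by linarith
    rw [hf] at h
    simp only at h
    rw [div_eq_div_iff h1a.ne' h1b.ne'] at h
    have h2 : γ * a = γ * b := by linear_combination h
    exact mul_left_cancel₀ hγ.ne' h2
  have hrw : ∀ t ∈ Set.Ioo (0:ℝ) 1,
      |γ/(1-t)^2| • g (f t) = Real.sqrt γ * (t ^ ((φ:ℝ)+1/2-1) * (1-t) ^ (s-1)) := by
    intro t ht
    obtain ⟨ht0, ht1⟩ := ht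
    have h1 : (0:ℝ) < 1 - t := by linarith
    have hk : γ + f t = γ / (1 - t) := by
      show γ + γ * t / (1 - t) = γ / (1 - t)
      field_simp
      ring
    have e1 : γ / (γ + f t) = 1 - t := by
      rw [hk, div_div_eq_mul_div, mul_comm, mul_div_assoc, div_self hγ.ne', mul_one]
    have e2 : f t / (γ + f t) = t := by
      rw [hk]
      show γ * t / (1 - t) / (γ / (1 - t)) = t
      field_simp
    have e3 : γ / (f t * (γ + f t)) = (1-t)^2 / (γ * t) := by
      rw [hk]
      show γ / (γ * t / (1 - t) * (γ / (1 - t))) = (1-t)^2 / (γ * t)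
      rw [div_eq_div_iff (by positivity) (by positivity)]
      field_simp
    have e4 : Real.sqrt (γ / (f t * (γ + f t))) = (1-t) / (Real.sqrt γ * Real.sqrt t) := by
      rw [e3, Real.sqrt_div (by positivity) _, Real.sqrt_sq h1.le, Real.sqrt_mul hγ.le]
    rw [smul_eq_mul, hg]
    simp only
    rw [e1, e2, e4, abs_of_pos (by positivity : (0:ℝ) < γ/(1-t)^2)]
    have p1 : t ^ ((φ:ℝ)+1/2-1) = t ^ φ / Real.sqrt t := by
      have e5 : ((φ:ℝ)+1/2-1) = (φ:ℝ) - (1/2 : ℝ) := by ring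
      rw [e5, Real.sqrt_eq_rpow, ← Real.rpow_natCast t φ, ← Real.rpow_sub ht0]
    have p2 : (1-t) ^ (s-1) = (1-t) ^ s / (1-t) := by
      rw [Real.rpow_sub h1, Real.rpow_one]
    rw [p1, p2]
    have hsg : Real.sqrt γ ≠ 0 := by positivity
    have hst : Real.sqrt t ≠ 0 := by positivity
    have hγγ : Real.sqrt γ * Real.sqrt γ = γ := Real.mul_self_sqrt hγ.le
    field_simp
    linear_combination (-1 : ℝ) * hγγ
  have hint : IntegrableOn g (Set.Ioi (0:ℝ)) := by
    rw [← himg, integrableOn_image_iff_integrableOn_abs_deriv_smul measurableSet_Ioo hderiv hinj]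
    exact IntegrableOn.congr_fun
      ((beta_integrableOn (show (0:ℝ) < (φ:ℝ)+1/2 by positivity) hs).const_mul (Real.sqrt γ))
      (fun t ht => (hrw t ht).symm) measurableSet_Ioo
  refine ⟨hint, ?_⟩
  rw [show Set.Ioi (0:ℝ) = f '' Set.Ioo 0 1 from himg.symm,
    integral_image_eq_integral_abs_deriv_smul measurableSet_Ioo hderiv hinj,
    setIntegral_congr_fun measurableSet_Ioo hrw, integral_const_mul,
    beta_integral_eq (show (0:ℝ) < (φ:ℝ)+1/2 by positivity) hs]

set_option maxHeartbeats 2000000 in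
/-- The marginal likelihood integral of the zero-inflated negative binomial model under
the prior `√(γ/(κ(γ+κ)))·𝟙(0 < α < 1)` equals
`(ϖ!·√γ/(n+1)!) · ∑_{j=0}^{ϖ} ((n−j)!/(ϖ−j)!) · B(φ + 1/2, (n − j)·γ)`, where
`B(x, y) = Γ(x)Γ(y)/Γ(x + y)` is the Beta function. -/
theorem zinb_marginal_likelihood (γ : ℝ) (hγ : 0 < γ) (n ϖ φ : ℕ) (hn : 1 ≤ n)
    (hϖ : ϖ < n) (hφ : 1 ≤ φ) :
    ∫ α in Set.Ioo (0 : ℝ) 1, ∫ κ in Set.Ioi (0 : ℝ),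
        (α + (1 - α) * (1 + κ / γ) ^ (-γ)) ^ ϖ * (1 - α) ^ (n - ϖ) *
          (γ / (γ + κ)) ^ (((n - ϖ : ℕ) : ℝ) * γ) * (κ / (γ + κ)) ^ φ *
          Real.sqrt (γ / (κ * (γ + κ))) =
      ((Nat.factorial ϖ : ℝ) * Real.sqrt γ / (Nat.factorial (n + 1) : ℝ)) *
        ∑ j ∈ Finset.range (ϖ + 1),
          ((Nat.factorial (n - j) : ℝ) / (Nat.factorial (ϖ - j) : ℝ)) *
            (Real.Gamma ((φ : ℝ) + 1 / 2) * Real.Gamma (((n - j : ℕ) : ℝ) * γ) /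
              Real.Gamma ((φ : ℝ) + 1 / 2 + ((n - j : ℕ) : ℝ) * γ)) := by
  -- notation
  set B : ℕ → ℝ := fun j => Real.Gamma ((φ : ℝ) + 1 / 2) * Real.Gamma (((n - j : ℕ) : ℝ) * γ) /
      Real.Gamma ((φ : ℝ) + 1 / 2 + ((n - j : ℕ) : ℝ) * γ) with hB
  have hsj : ∀ j ∈ Finset.range (ϖ + 1), (0:ℝ) < ((n - j : ℕ) : ℝ) * γ := by
    intro j hj
    have : 0 < n - j := by
      have := Finset.mem_range.mp hj; omega
    exact mul_pos (by exact_mod_cast this) hγ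
  -- pointwise expansion of the integrand
  have key : ∀ α ∈ Set.Ioo (0:ℝ) 1, ∀ κ ∈ Set.Ioi (0:ℝ),
      (α + (1 - α) * (1 + κ / γ) ^ (-γ)) ^ ϖ * (1 - α) ^ (n - ϖ) *
        (γ / (γ + κ)) ^ (((n - ϖ : ℕ) : ℝ) * γ) * (κ / (γ + κ)) ^ φ *
        Real.sqrt (γ / (κ * (γ + κ)))
      = ∑ j ∈ Finset.range (ϖ + 1), (ϖ.choose j : ℝ) * α ^ j * (1-α) ^ (n-j) *
          ((γ/(γ+κ)) ^ (((n-j:ℕ):ℝ)*γ) * (κ/(γ+κ)) ^ φ * Real.sqrt (γ/(κ*(γ+κ)))) := by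
    intro α hα κ hκ
    have hκ0 : (0:ℝ) < κ := hκ
    have hγκ : (0:ℝ) < γ + κ := by linarith
    have hx : (0:ℝ) < γ/(γ+κ) := by positivity
    have hu : (1 + κ/γ) ^ (-γ) = (γ/(γ+κ)) ^ γ := by
      have e0 : 1 + κ/γ = (γ/(γ+κ))⁻¹ := by
        rw [inv_div]
        field_simp
      rw [e0, Real.inv_rpow hx.le, ← Real.rpow_neg hx.le, neg_neg]
    rw [hu, add_pow]
    rw [Finset.sum_mul, Finset.sum_mul, Finset.sum_mul, Finset.sum_mul]
    refine Finset.sum_congr rfl (fun j hj => ?_)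
    have hjϖ : j ≤ ϖ := Nat.lt_succ_iff.mp (Finset.mem_range.mp hj)
    have e1 : (1-α)^(ϖ-j) * (1-α)^(n-ϖ) = (1-α)^(n-j) := by
      rw [← pow_add]; congr 1; omega
    have e2 : ((γ/(γ+κ))^γ)^(ϖ-j) * (γ/(γ+κ))^(((n-ϖ:ℕ):ℝ)*γ)
        = (γ/(γ+κ))^(((n-j:ℕ):ℝ)*γ) := by
      rw [← Real.rpow_natCast ((γ/(γ+κ))^γ) (ϖ-j), ← Real.rpow_mul hx.le, ← Real.rpow_add hx]
      congr 1
      rw [Nat.cast_sub hjϖ, Nat.cast_sub (by omega : ϖ ≤ n), Nat.cast_sub (by omega : j ≤ n)]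
      ring
    rw [mul_pow]
    trans ((ϖ.choose j : ℝ) * α^j * ((1-α)^(ϖ-j) * (1-α)^(n-ϖ)) *
      (((γ/(γ+κ))^γ)^(ϖ-j) * (γ/(γ+κ))^(((n-ϖ:ℕ):ℝ)*γ)) * ((κ/(γ+κ))^φ) *
      Real.sqrt (γ/(κ*(γ+κ))))
    · ring
    · rw [e1, e2]; ring
  -- inner integral
  have inner_eq : ∀ α ∈ Set.Ioo (0:ℝ) 1,
      (∫ κ in Set.Ioi (0:ℝ),
        (α + (1 - α) * (1 + κ / γ) ^ (-γ)) ^ ϖ * (1 - α) ^ (n - ϖ) *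
          (γ / (γ + κ)) ^ (((n - ϖ : ℕ) : ℝ) * γ) * (κ / (γ + κ)) ^ φ *
          Real.sqrt (γ / (κ * (γ + κ))))
      = ∑ j ∈ Finset.range (ϖ + 1), (ϖ.choose j : ℝ) * α ^ j * (1-α) ^ (n-j) *
          (Real.sqrt γ * B j) := by
    intro α hα
    rw [setIntegral_congr_fun measurableSet_Ioi (fun κ hκ => key α hα κ hκ)]
    rw [integral_finset_sum _ (fun j hj =>
      ((kappa_integral hγ (hsj j hj) φ).1.const_mul ((ϖ.choose j : ℝ) * α ^ j * (1-α) ^ (n-j))))]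
    refine Finset.sum_congr rfl (fun j hj => ?_)
    rw [integral_const_mul, (kappa_integral hγ (hsj j hj) φ).2]
  rw [setIntegral_congr_fun measurableSet_Ioo (fun α hα => inner_eq α hα)]
  have hcont : ∀ j ∈ Finset.range (ϖ + 1),
      IntegrableOn (fun α : ℝ => (ϖ.choose j : ℝ) * α ^ j * (1-α) ^ (n-j) *
        (Real.sqrt γ * B j)) (Set.Ioo 0 1) := by
    intro j hj
    have hc : Continuous (fun α : ℝ => (ϖ.choose j : ℝ) * α ^ j * (1-α) ^ (n-j) *
        (Real.sqrt γ * B j)) := by continuity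
    exact (hc.continuousOn.integrableOn_compact isCompact_Icc).mono_set Set.Ioo_subset_Icc_self
  rw [integral_finset_sum _ hcont]
  rw [Finset.mul_sum]
  refine Finset.sum_congr rfl (fun j hj => ?_)
  have hjϖ : j ≤ ϖ := Nat.lt_succ_iff.mp (Finset.mem_range.mp hj)
  have e3 : (fun α : ℝ => (ϖ.choose j : ℝ) * α ^ j * (1-α) ^ (n-j) * (Real.sqrt γ * B j))
      = fun α : ℝ => ((ϖ.choose j : ℝ) * (Real.sqrt γ * B j)) * (α ^ j * (1-α) ^ (n-j)) := by
    funext α; ring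
  rw [e3, integral_const_mul, alpha_integral]
  have e4 : j + (n - j) + 1 = n + 1 := by omega
  rw [e4]
  rw [Nat.cast_choose ℝ hjϖ]
  have f1 : (Nat.factorial j : ℝ) ≠ 0 := Nat.cast_ne_zero.mpr (Nat.factorial_ne_zero _)
  have f2 : (Nat.factorial (ϖ - j) : ℝ) ≠ 0 := Nat.cast_ne_zero.mpr (Nat.factorial_ne_zero _)
  have f3 : (Nat.factorial (n + 1) : ℝ) ≠ 0 := Nat.cast_ne_zero.mpr (Nat.factorial_ne_zero _)
  have gen : ∀ b : ℝ,
      (Nat.factorial ϖ : ℝ) / ((Nat.factorial j : ℝ) * (Nat.factorial (ϖ-j) : ℝ)) *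
        (Real.sqrt γ * b) *
        ((Nat.factorial j : ℝ) * (Nat.factorial (n-j) : ℝ) / (Nat.factorial (n+1) : ℝ))
      = (Nat.factorial ϖ : ℝ) * Real.sqrt γ / (Nat.factorial (n+1) : ℝ) *
        ((Nat.factorial (n-j) : ℝ) / (Nat.factorial (ϖ-j) : ℝ) * b) := by
    intro b
    field_simp
  exact gen (B j)
end

section
/- Let n ≥ 1 and let ϖ, φ be natural numbers with 0 ≤ ϖ < n and φ ≥ 1. Then the Bayes factor of the zero-inflated Poisson model against the Poisson model, defined as the ratio of the ZIP marginal likelihood integral ∫₀^{1}∫₀^{∞} (α + (1 − α)e^{−θ})^{ϖ}(1 − α)^{n−ϖ}e^{−(n−ϖ)θ}θ^{φ}·θ^{−1/2} dθ dα to the Poisson marginal likelihood integral ∫₀^{∞} e^{−nθ}θ^{φ}·θ^{−1/2} dθ, equals (ϖ!/(n+1)!) · ∑_{j=0}^{ϖ} ((n−j)!/(ϖ−j)!) · (1 − j/n)^{−(φ + 1/2)}. -/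
open Real Finset MeasureTheory Set

lemma fact_prod (a b : ℕ) :
    a.factorial * ∏ j ∈ Finset.range (b+1), (a+1+j) = (a+b+1).factorial := by
  induction b with
  | zero => simp [Nat.factorial_succ, mul_comm]
  | succ b ih =>
      rw [Finset.prod_range_succ, ← mul_assoc, ih,
        show a + (b+1) + 1 = (a+b+1)+1 by ring, Nat.factorial_succ (a+b+1)]
      ring

lemma integrableOn_rpow_exp {s r : ℝ} (hs : 0 < s) (hr : 0 < r) :
    IntegrableOn (fun t : ℝ => t ^ (s-1) * Real.exp (-(r * t))) (Set.Ioi 0) := by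
  have h := Real.GammaIntegral_convergent hs
  have h2 : IntegrableOn (fun x : ℝ => Real.exp (-(r*x)) * (r*x) ^ (s-1)) (Set.Ioi 0) := by
    have := (integrableOn_Ioi_comp_mul_left_iff
      (fun x : ℝ => Real.exp (-x) * x ^ (s-1)) 0 hr).mpr (by simpa using h)
    simpa using this
  have h3 : IntegrableOn (fun x : ℝ => r ^ (1-s) * (Real.exp (-(r*x)) * (r*x) ^ (s-1)))
      (Set.Ioi 0) := h2.const_mul _
  refine h3.congr_fun (fun t ht => ?_) measurableSet_Ioi
  have ht0 : (0:ℝ) < t := ht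
  beta_reduce
  rw [Real.mul_rpow hr.le ht0.le, ← mul_assoc, ← mul_assoc, mul_comm (r ^ (1-s)),
    mul_assoc (Real.exp _), ← Real.rpow_add hr]
  ring_nf
  rw [Real.rpow_zero]
  ring

lemma beta_nat (a b : ℕ) :
    ∫ x in Set.Ioo (0:ℝ) 1, x ^ a * (1 - x) ^ b
      = (a.factorial * b.factorial : ℝ) / (a+b+1).factorial := by
  have hB := Complex.betaIntegral_eval_nat_add_one_right
    (u := (a:ℂ) + 1) (by simp; positivity) b
  rw [Complex.betaIntegral] at hB
  simp only [add_sub_cancel_right] at hB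
  have h1 : (∫ x : ℝ in (0:ℝ)..1, ((x:ℂ)) ^ ((a:ℂ)) * (1 - (x:ℂ)) ^ ((b:ℂ)))
      = ((∫ x in (0:ℝ)..1, x ^ a * (1 - x) ^ b : ℝ) : ℂ) := by
    rw [← intervalIntegral.integral_ofReal]
    refine intervalIntegral.integral_congr (fun x _ => ?_)
    push_cast
    rw [Complex.cpow_natCast, Complex.cpow_natCast]
  rw [h1] at hB
  have hP : ((a+b+1).factorial : ℂ)
      = (a.factorial : ℂ) * ∏ j ∈ Finset.range (b+1), ((a:ℂ)+1+(j:ℂ)) := by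
    rw [← fact_prod a b]
    push_cast
    ring
  have hfa : (a.factorial : ℂ) ≠ 0 := by exact_mod_cast a.factorial_ne_zero
  have hfab : ((a+b+1).factorial : ℂ) ≠ 0 := by exact_mod_cast (a+b+1).factorial_ne_zero
  have hProd : (∏ j ∈ Finset.range (b+1), ((a:ℂ)+1+(j:ℂ))) ≠ 0 := by
    intro h
    rw [h, mul_zero] at hP
    exact hfab hP
  have key : (∫ x in (0:ℝ)..1, x ^ a * (1-x) ^ b : ℝ)
      = (a.factorial * b.factorial : ℝ) / (a+b+1).factorial := by
    apply Complex.ofReal_inj.mp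
    rw [hB]
    push_cast
    rw [div_eq_div_iff hProd hfab, hP]
    ring
  rw [← MeasureTheory.integral_Ioc_eq_integral_Ioo,
    ← intervalIntegral.integral_of_le zero_le_one, key]

/-- The Bayes factor of the zero-inflated Poisson model against the Poisson model (the
ratio of the ZIP marginal likelihood integral to the Poisson marginal likelihood
integral, both under the Jeffreys prior `θ^{−1/2}`, with a uniform prior on the
zero-inflation parameter) equals
`(ϖ!/(n+1)!) · ∑_{j=0}^{ϖ} ((n−j)!/(ϖ−j)!) · (1 − j/n)^{−(φ + 1/2)}`. -/
theorem zip_vs_poisson_bayes_factor (n ϖ φ : ℕ) (hn : 1 ≤ n) (hϖ : ϖ < n) (hφ : 1 ≤ φ) :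
    (∫ α in Set.Ioo (0 : ℝ) 1, ∫ θ in Set.Ioi (0 : ℝ),
        (α + (1 - α) * Real.exp (-θ)) ^ ϖ * (1 - α) ^ (n - ϖ) *
          Real.exp (-((n - ϖ : ℕ) : ℝ) * θ) * θ ^ φ * θ ^ (-(1 / 2 : ℝ))) /
      (∫ θ in Set.Ioi (0 : ℝ), Real.exp (-(n : ℝ) * θ) * θ ^ φ * θ ^ (-(1 / 2 : ℝ))) =
    ((Nat.factorial ϖ : ℝ) / (Nat.factorial (n + 1) : ℝ)) *
      ∑ j ∈ Finset.range (ϖ + 1),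
        ((Nat.factorial (n - j) : ℝ) / (Nat.factorial (ϖ - j) : ℝ)) *
          (1 - (j : ℝ) / (n : ℝ)) ^ (-((φ : ℝ) + 1 / 2)) := by
  set s : ℝ := (φ:ℝ) + 1/2 with hsdef
  have hs : (0:ℝ) < s := by positivity
  have hn0 : (0:ℝ) < n := by positivity
  have hG : (0:ℝ) < Real.Gamma s := Real.Gamma_pos_of_pos hs
  have hpow : ∀ θ:ℝ, 0 < θ → θ ^ φ * θ ^ (-(1/2:ℝ)) = θ ^ (s - 1) := by
    intro θ hθ
    rw [← Real.rpow_natCast θ φ, ← Real.rpow_add hθ]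
    congr 1
    rw [hsdef]; ring
  -- positivity of n - k
  have hr : ∀ k ∈ Finset.range (ϖ+1), (0:ℝ) < ((n - k : ℕ) : ℝ) := by
    intro k hk
    have : k ≤ ϖ := Nat.lt_succ_iff.mp (Finset.mem_range.mp hk)
    have : 0 < n - k := by omega
    exact_mod_cast this
  -- denominator
  have hD : (∫ θ in Set.Ioi (0:ℝ), Real.exp (-(n:ℝ)*θ) * θ^φ * θ^(-(1/2:ℝ)))
      = (1/(n:ℝ))^s * Real.Gamma s := by
    rw [← Real.integral_rpow_mul_exp_neg_mul_Ioi hs hn0]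
    refine setIntegral_congr_fun measurableSet_Ioi (fun θ hθ => ?_)
    rw [mul_assoc, hpow θ hθ]
    ring
  -- inner integral
  have hInner : ∀ α : ℝ,
      (∫ θ in Set.Ioi (0:ℝ), (α + (1 - α) * Real.exp (-θ)) ^ ϖ * (1 - α) ^ (n - ϖ) *
          Real.exp (-((n - ϖ : ℕ) : ℝ) * θ) * θ ^ φ * θ ^ (-(1 / 2 : ℝ)))
      = ∑ k ∈ Finset.range (ϖ+1),
          ((ϖ.choose k : ℝ) * α^k * (1-α)^(n-k)) * ((1/((n-k:ℕ):ℝ))^s * Real.Gamma s) := by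
    intro α
    have step1 : (∫ θ in Set.Ioi (0:ℝ), (α + (1 - α) * Real.exp (-θ)) ^ ϖ * (1 - α) ^ (n - ϖ) *
          Real.exp (-((n - ϖ : ℕ) : ℝ) * θ) * θ ^ φ * θ ^ (-(1 / 2 : ℝ)))
        = ∫ θ in Set.Ioi (0:ℝ), ∑ k ∈ Finset.range (ϖ+1),
            ((ϖ.choose k : ℝ) * α^k * (1-α)^(n-k))
              * (θ ^ (s-1) * Real.exp (-(((n-k:ℕ):ℝ) * θ))) := by
      refine setIntegral_congr_fun measurableSet_Ioi (fun θ hθ => ?_)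
      have hθ' : (0:ℝ) < θ := hθ
      have hexp : ∀ m : ℕ, Real.exp (-((m:ℕ):ℝ)*θ) = Real.exp (-θ) ^ m := by
        intro m
        rw [← Real.exp_nat_mul]
        congr 1
        ring
      rw [add_pow, Finset.sum_mul, Finset.sum_mul, Finset.sum_mul, Finset.sum_mul]
      refine Finset.sum_congr rfl (fun k hk => ?_)
      have hk' : k ≤ ϖ := Nat.lt_succ_iff.mp (Finset.mem_range.mp hk)
      rw [mul_pow, hexp (n - ϖ), show Real.exp (-(((n-k:ℕ):ℝ) * θ)) =
          Real.exp (-(((n-k:ℕ):ℝ))*θ) by ring_nf, hexp (n - k),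
        show θ ^ (s-1) = θ ^ φ * θ ^ (-(1/2:ℝ)) from (hpow θ hθ').symm,
        show n - k = (ϖ-k)+(n-ϖ) by omega, pow_add, pow_add]
      ring
    rw [step1, MeasureTheory.integral_finset_sum]
    · refine Finset.sum_congr rfl (fun k hk => ?_)
      rw [integral_const_mul, Real.integral_rpow_mul_exp_neg_mul_Ioi hs (hr k hk)]
    · intro k hk
      exact (integrableOn_rpow_exp hs (hr k hk)).const_mul _
  -- outer integral
  have hNum : (∫ α in Set.Ioo (0 : ℝ) 1, ∫ θ in Set.Ioi (0 : ℝ),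
        (α + (1 - α) * Real.exp (-θ)) ^ ϖ * (1 - α) ^ (n - ϖ) *
          Real.exp (-((n - ϖ : ℕ) : ℝ) * θ) * θ ^ φ * θ ^ (-(1 / 2 : ℝ)))
      = ∑ k ∈ Finset.range (ϖ+1),
          ((ϖ.choose k : ℝ) * ((1/((n-k:ℕ):ℝ))^s * Real.Gamma s))
            * ((k.factorial * (n-k).factorial : ℝ) / (n+1).factorial) := by
    rw [setIntegral_congr_fun measurableSet_Ioo (fun α _ => hInner α),
      MeasureTheory.integral_finset_sum]
    · refine Finset.sum_congr rfl (fun k hk => ?_)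
      have hk' : k ≤ ϖ := Nat.lt_succ_iff.mp (Finset.mem_range.mp hk)
      have hre : (fun α : ℝ => ((ϖ.choose k : ℝ) * α^k * (1-α)^(n-k))
            * ((1/((n-k:ℕ):ℝ))^s * Real.Gamma s))
          = fun α : ℝ => ((ϖ.choose k : ℝ) * ((1/((n-k:ℕ):ℝ))^s * Real.Gamma s))
            * (α^k * (1-α)^(n-k)) := by
        funext α; ring
      rw [hre, integral_const_mul, beta_nat k (n-k),
        show k + (n-k) + 1 = n + 1 by omega]
    · intro k hk
      exact (Continuous.integrableOn_Icc (by fun_prop)).mono_set Set.Ioo_subset_Icc_self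
  rw [hNum, hD, Finset.sum_div, Finset.mul_sum]
  refine Finset.sum_congr rfl (fun k hk => ?_)
  have hk' : k ≤ ϖ := Nat.lt_succ_iff.mp (Finset.mem_range.mp hk)
  have hrk := hr k hk
  have hC : (ϖ.choose k : ℝ) = (ϖ.factorial : ℝ) / (k.factorial * (ϖ-k).factorial) := by
    rw [eq_div_iff (by positivity), ← mul_assoc]
    exact_mod_cast Nat.choose_mul_factorial_mul_factorial hk'
  have hsub : (1 - (k:ℝ)/(n:ℝ)) = ((n-k:ℕ):ℝ) / n := by
    rw [Nat.cast_sub (by omega)]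
    field_simp
  have h2 : (1 - (k:ℝ)/(n:ℝ)) ^ (-((φ:ℝ) + 1/2))
      = (n:ℝ) ^ s / ((n-k:ℕ):ℝ) ^ s := by
    rw [show -((φ:ℝ) + 1/2) = -s by rw [hsdef], hsub,
      Real.rpow_neg (by positivity), Real.div_rpow hrk.le hn0.le, inv_div]
  have h3 : ((1:ℝ)/((n-k:ℕ):ℝ))^s = (((n-k:ℕ):ℝ) ^ s)⁻¹ := by
    rw [one_div, Real.inv_rpow hrk.le]
  have h4 : ((1:ℝ)/(n:ℝ))^s = ((n:ℝ) ^ s)⁻¹ := by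
    rw [one_div, Real.inv_rpow hn0.le]
  have hns : (0:ℝ) < (n:ℝ) ^ s := Real.rpow_pos_of_pos hn0 s
  have hnks : (0:ℝ) < ((n-k:ℕ):ℝ) ^ s := Real.rpow_pos_of_pos hrk s
  have hf1 : (0:ℝ) < ((n+1).factorial : ℝ) := by exact_mod_cast (n+1).factorial_pos
  have hf2 : (0:ℝ) < ((ϖ-k).factorial : ℝ) := by exact_mod_cast (ϖ-k).factorial_pos
  have hf3 : (0:ℝ) < (k.factorial : ℝ) := by exact_mod_cast k.factorial_pos
  rw [h2, h3, h4, hC]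
  field_simp
end

section
/- Fix an integer n ≥ 2 and a real number φ ≥ 0. For a natural number ϖ with 0 ≤ ϖ ≤ n − 1, define β(ϖ) = (ϖ!/(n+1)!) · ∑_{j=0}^{ϖ} ((n−j)!/(ϖ−j)!) · (1 − j/n)^{−(φ + 1/2)}. Then β is strictly increasing in ϖ on {0, 1, …, n − 1}: for 0 ≤ ϖ₁ < ϖ₂ ≤ n − 1 one has β(ϖ₁) < β(ϖ₂). -/
open Real Finset

lemma zip_step (n : ℕ) (c : ℝ) (m : ℕ) (hm : m + 1 < n) :
    ((Nat.factorial m : ℝ) / (Nat.factorial (n + 1) : ℝ)) *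
        ∑ j ∈ Finset.range (m + 1),
          ((Nat.factorial (n - j) : ℝ) / (Nat.factorial (m - j) : ℝ)) *
            (1 - (j : ℝ) / (n : ℝ)) ^ c <
      ((Nat.factorial (m + 1) : ℝ) / (Nat.factorial (n + 1) : ℝ)) *
        ∑ j ∈ Finset.range (m + 1 + 1),
          ((Nat.factorial (n - j) : ℝ) / (Nat.factorial (m + 1 - j) : ℝ)) *
            (1 - (j : ℝ) / (n : ℝ)) ^ c := by
  have hn0 : (0:ℝ) < n := by
    have h : 0 < n := by omega
    exact_mod_cast h
  have hbase : ∀ j : ℕ, j < n → (0:ℝ) < 1 - (j : ℝ) / n := by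
    intro j hj
    have : (j:ℝ) / n < 1 := by
      rw [div_lt_one hn0]; exact_mod_cast hj
    linarith
  rw [Finset.mul_sum, Finset.mul_sum]
  conv_rhs => rw [Finset.sum_range_succ]
  have hle : ∑ j ∈ Finset.range (m + 1),
      ((Nat.factorial m : ℝ) / (Nat.factorial (n + 1) : ℝ)) *
        (((Nat.factorial (n - j) : ℝ) / (Nat.factorial (m - j) : ℝ)) *
          (1 - (j : ℝ) / (n : ℝ)) ^ c) ≤
      ∑ j ∈ Finset.range (m + 1),
      ((Nat.factorial (m + 1) : ℝ) / (Nat.factorial (n + 1) : ℝ)) *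
        (((Nat.factorial (n - j) : ℝ) / (Nat.factorial (m + 1 - j) : ℝ)) *
          (1 - (j : ℝ) / (n : ℝ)) ^ c) := by
    apply Finset.sum_le_sum
    intro j hj
    have hjm : j ≤ m := by simpa [Nat.lt_succ_iff] using hj
    have ht : (0:ℝ) ≤ (1 - (j : ℝ) / n) ^ c :=
      Real.rpow_nonneg (le_of_lt (hbase j (by omega))) c
    have key : (Nat.factorial m : ℝ) / (Nat.factorial (m - j) : ℝ) ≤
        (Nat.factorial (m + 1) : ℝ) / (Nat.factorial (m + 1 - j) : ℝ) := by
      rw [div_le_div_iff₀ (by positivity) (by positivity)]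
      have h1 : m + 1 - j = (m - j) + 1 := by omega
      rw [h1, Nat.factorial_succ, Nat.factorial_succ]
      have h2 : ((m - j : ℕ) : ℝ) + 1 ≤ ((m : ℕ) : ℝ) + 1 := by
        have : (m - j : ℕ) ≤ m := Nat.sub_le m j
        exact_mod_cast Nat.succ_le_succ this
      push_cast
      have f1 : (0:ℝ) < (Nat.factorial m : ℝ) := by positivity
      have f2 : (0:ℝ) < ((Nat.factorial (m - j) : ℕ) : ℝ) := by positivity
      nlinarith [mul_le_mul_of_nonneg_left (mul_le_mul_of_nonneg_right h2 f2.le) f1.le]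
    have hnn : (0:ℝ) ≤ (Nat.factorial (n - j) : ℝ) * (1 - (j : ℝ) / n) ^ c /
        (Nat.factorial (n + 1) : ℝ) := by
      apply div_nonneg (mul_nonneg (by positivity) ht) (by positivity)
    have H := mul_le_mul_of_nonneg_left key hnn
    calc ((Nat.factorial m : ℝ) / (Nat.factorial (n + 1) : ℝ)) *
          (((Nat.factorial (n - j) : ℝ) / (Nat.factorial (m - j) : ℝ)) *
            (1 - (j : ℝ) / (n : ℝ)) ^ c)
        = ((Nat.factorial (n - j) : ℝ) * (1 - (j : ℝ) / n) ^ c /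
            (Nat.factorial (n + 1) : ℝ)) *
            ((Nat.factorial m : ℝ) / (Nat.factorial (m - j) : ℝ)) := by ring
      _ ≤ ((Nat.factorial (n - j) : ℝ) * (1 - (j : ℝ) / n) ^ c /
            (Nat.factorial (n + 1) : ℝ)) *
            ((Nat.factorial (m + 1) : ℝ) / (Nat.factorial (m + 1 - j) : ℝ)) := H
      _ = ((Nat.factorial (m + 1) : ℝ) / (Nat.factorial (n + 1) : ℝ)) *
          (((Nat.factorial (n - j) : ℝ) / (Nat.factorial (m + 1 - j) : ℝ)) *
            (1 - (j : ℝ) / (n : ℝ)) ^ c) := by ring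
  have hpos : 0 < ((Nat.factorial (m + 1) : ℝ) / (Nat.factorial (n + 1) : ℝ)) *
      (((Nat.factorial (n - (m + 1)) : ℝ) / (Nat.factorial (m + 1 - (m + 1)) : ℝ)) *
        (1 - ((m + 1 : ℕ) : ℝ) / (n : ℝ)) ^ c) := by
    have ht : (0:ℝ) < (1 - ((m + 1 : ℕ) : ℝ) / n) ^ c :=
      Real.rpow_pos_of_pos (hbase (m + 1) hm) c
    positivity
  linarith

/-- For fixed `n ≥ 2` and `φ ≥ 0`, the Bayes factor of ZIP against Poisson,
`β(ϖ) = (ϖ!/(n+1)!) · ∑_{j=0}^{ϖ} ((n−j)!/(ϖ−j)!) · (1 − j/n)^{−(φ + 1/2)}`,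
is strictly increasing in the number of zero observations `ϖ ∈ {0, 1, …, n − 1}`. -/
theorem zip_bayes_factor_strictMono_in_zero_count (n : ℕ) (hn : 2 ≤ n) (φ : ℝ)
    (hφ : 0 ≤ φ) (ϖ₁ ϖ₂ : ℕ) (h₁₂ : ϖ₁ < ϖ₂) (h₂ : ϖ₂ ≤ n - 1) :
    ((Nat.factorial ϖ₁ : ℝ) / (Nat.factorial (n + 1) : ℝ)) *
        ∑ j ∈ Finset.range (ϖ₁ + 1),
          ((Nat.factorial (n - j) : ℝ) / (Nat.factorial (ϖ₁ - j) : ℝ)) *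
            (1 - (j : ℝ) / (n : ℝ)) ^ (-(φ + 1 / 2)) <
      ((Nat.factorial ϖ₂ : ℝ) / (Nat.factorial (n + 1) : ℝ)) *
        ∑ j ∈ Finset.range (ϖ₂ + 1),
          ((Nat.factorial (n - j) : ℝ) / (Nat.factorial (ϖ₂ - j) : ℝ)) *
            (1 - (j : ℝ) / (n : ℝ)) ^ (-(φ + 1 / 2)) := by
  induction ϖ₂ with
  | zero => omega
  | succ m ih =>
    have hm : m + 1 < n := by omega
    rcases Nat.lt_succ_iff_lt_or_eq.mp h₁₂ with h | h
    · exact lt_trans (ih h (by omega)) (zip_step n (-(φ + 1 / 2)) m hm)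
    · subst h
      exact zip_step n (-(φ + 1 / 2)) ϖ₁ hm
end
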